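/- Let k, ℓ be nonzero integers with |k| > |ℓ|. For every C¹ function α : [0, π/2] → ℝ with α(0) = 0 and α(π/2) = π one has ∫₀^{π/2} (k²·tan s + ℓ²·cot s)·α′(s)²·sin²α(s) ds ≥ 8·(k² − ℓ²)/ln(k²/ℓ²), and this lower bound is attained by α(s) = arccos(1 − 2·ln((k²/ℓ²)·sin²s + cos²s)/ln(k²/ℓ²)). In other words, this configuration is a global minimizer of the reduced σ₂-energy among all maps in the ansatz with the same boundary conditions. -/

import Mathlib

open Real Set intervalIntegral

section Stmt5Aux
open MeasureTheory

noncomputable def DD (a b s : ℝ) : ℝ := a * sin s ^ 2 + b * cos s ^ 2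

lemma DD_pos {a b : ℝ} (ha : 0 < a) (hb : 0 < b) (s : ℝ) : 0 < DD a b s := by
  have h := sin_sq_add_cos_sq s
  simp only [DD]
  rcases le_total a b with hab | hab
  · nlinarith [sq_nonneg (sin s), sq_nonneg (cos s)]
  · nlinarith [sq_nonneg (sin s), sq_nonneg (cos s)]

lemma hasDerivAt_DD (a b s : ℝ) :
    HasDerivAt (DD a b) (2 * (a - b) * sin s * cos s) s := by
  have h1 : HasDerivAt (fun s => sin s ^ 2) (2 * sin s * cos s) s := by
    simpa using (hasDerivAt_sin s).fun_pow 2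
  have h2 : HasDerivAt (fun s => cos s ^ 2) (-(2 * cos s * sin s)) s := by
    simpa [mul_comm, mul_assoc, mul_left_comm] using (hasDerivAt_cos s).fun_pow 2
  have := (h1.const_mul a).add (h2.const_mul b)
  refine this.congr_deriv ?_
  ring

lemma integral_sincos_div {a b : ℝ} (ha : 0 < a) (hb : 0 < b) (hab : a ≠ b) :
    ∫ s in (0:ℝ)..(π/2), sin s * cos s / DD a b s
      = Real.log (a / b) / (2 * (a - b)) := by
  have hD := DD_pos ha hb
  have hderiv : ∀ s ∈ uIcc (0:ℝ) (π/2),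
      HasDerivAt (fun s => Real.log (DD a b s) / (2 * (a - b)))
        (sin s * cos s / DD a b s) s := by
    intro s _
    have h := ((hasDerivAt_DD a b s).log (hD s).ne').div_const (2 * (a - b))
    have hab' : a - b ≠ 0 := sub_ne_zero.2 hab
    refine h.congr_deriv ?_
    symm
    rw [div_div, eq_div_iff (mul_ne_zero (hD s).ne' (by positivity))]
    field_simp [(hD s).ne']
  have hint : IntervalIntegrable (fun s => sin s * cos s / DD a b s) volume 0 (π/2) := by
    apply Continuous.intervalIntegrable
    have hDc : Continuous (DD a b) := by
      unfold DD; continuity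
    exact (continuous_sin.mul continuous_cos).div hDc (fun s => (hD s).ne')
  rw [integral_eq_sub_of_hasDerivAt hderiv hint]
  have : DD a b (π/2) = a := by simp [DD]
  have h0 : DD a b 0 = b := by simp [DD]
  rw [this, h0, Real.log_div ha.ne' hb.ne']
  ring

lemma part2 {a b : ℝ} (hb : 0 < b) (hab : b < a) :
    (∫ s in (0:ℝ)..(π/2), (a * tan s + b * cot s) *
        (derivWithin (fun s => arccos (1 - 2 * Real.log ((a / b) * sin s ^ 2
            + cos s ^ 2) / Real.log (a / b))) (Icc 0 (π/2)) s)^2 *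
        sin (arccos (1 - 2 * Real.log ((a / b) * sin s ^ 2 + cos s ^ 2)
            / Real.log (a / b)))^2)
      = 8 * (a - b) / Real.log (a / b) := by
  have ha : 0 < a := hb.trans hab
  set q := a / b with hqdef
  have hq1 : 1 < q := (one_lt_div hb).2 hab
  have hq0 : 0 < q := by linarith
  set L := Real.log q with hLdef
  have hL : 0 < L := Real.log_pos hq1
  have hDq := DD_pos hq0 one_pos
  have hpi : (0:ℝ) < π/2 := by positivity
  have hkey : EqOn
      (fun s => (a * tan s + b * cot s) *
        (derivWithin (fun s => arccos (1 - 2 * Real.log (q * sin s ^ 2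
            + cos s ^ 2) / L)) (Icc 0 (π/2)) s)^2 *
        sin (arccos (1 - 2 * Real.log (q * sin s ^ 2 + cos s ^ 2) / L))^2)
      (fun s => (16 * b * (q-1)^2 / L^2) * (sin s * cos s / DD q 1 s))
      (Ioo 0 (π/2)) := by
    intro s hs
    obtain ⟨hs1, hs2⟩ := hs
    have hsin : 0 < sin s := sin_pos_of_pos_of_lt_pi hs1 (by linarith [pi_pos])
    have hcos : 0 < cos s := Real.cos_pos_of_mem_Ioo ⟨by linarith [pi_pos], hs2⟩
    have hsin1 : sin s < 1 := by
      have h := Real.strictMonoOn_sin (a := s) (b := π/2)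
        ⟨by linarith [pi_pos], by linarith⟩ ⟨by linarith [pi_pos], le_refl _⟩ hs2
      simpa using h
    have hDval : q * sin s ^ 2 + cos s ^ 2 = DD q 1 s := by simp [DD]
    have hD1 : 1 < DD q 1 s := by
      simp only [DD]
      nlinarith [sin_sq_add_cos_sq s, pow_pos hsin 2]
    have hDq2 : DD q 1 s < q := by
      simp only [DD]
      nlinarith [sin_sq_add_cos_sq s, pow_pos hcos 2]
    have hlogD : 0 < Real.log (DD q 1 s) := Real.log_pos hD1
    have hlogD2 : Real.log (DD q 1 s) < L := Real.log_lt_log (by positivity) hDq2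
    set u : ℝ → ℝ := fun t => 1 - 2 * Real.log (q * sin t ^ 2 + cos t ^ 2) / L
      with hudef
    have huval : u s = 1 - 2 * Real.log (DD q 1 s) / L := by rw [hudef]; simp [hDval]
    have hu1 : u s < 1 := by
      rw [huval]
      have : 0 < 2 * Real.log (DD q 1 s) / L := by positivity
      linarith
    have hu2 : -1 < u s := by
      rw [huval]
      have : 2 * Real.log (DD q 1 s) / L < 2 := by
        rw [div_lt_iff₀ hL]; linarith
      linarith
    have hX : 0 < 1 - u s ^ 2 := by nlinarith
    -- derivative of u
    have hu' : HasDerivAt u (-(4 * (q-1) * sin s * cos s / (L * DD q 1 s))) s := by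
      have h1 : HasDerivAt (fun t => q * sin t ^ 2 + cos t ^ 2)
          (2 * (q - 1) * sin s * cos s) s := by
        have := hasDerivAt_DD q 1 s
        apply this.congr_of_eventuallyEq
        filter_upwards with t
        simp [DD]
      have h2 := (h1.log (by rw [hDval]; exact (hDq s).ne'))
      have h3 := (h2.const_mul 2).div_const L
      have h4 := h3.const_sub 1
      refine h4.congr_deriv ?_
      symm
      rw [hDval]
      field_simp
      ring
    have harc := (Real.hasDerivAt_arccos hu2.ne' hu1.ne).comp s hu'
    have hdw : derivWithin (fun t => arccos (u t)) (Icc 0 (π/2)) s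
        = -(1 / Real.sqrt (1 - u s ^ 2)) * (-(4 * (q-1) * sin s * cos s / (L * DD q 1 s))) := by
      have h5 : HasDerivAt (fun t => arccos (u t))
          (-(1 / Real.sqrt (1 - u s ^ 2)) * (-(4 * (q-1) * sin s * cos s / (L * DD q 1 s)))) s := harc
      exact h5.hasDerivWithinAt.derivWithin ((uniqueDiffOn_Icc hpi) s ⟨hs1.le, hs2.le⟩)
    simp only
    rw [show (fun t => arccos (1 - 2 * Real.log (q * sin t ^ 2 + cos t ^ 2) / L))
        = fun t => arccos (u t) from rfl, hdw]
    rw [show (1 - 2 * Real.log (q * sin s ^ 2 + cos s ^ 2) / L) = u s from rfl]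
    rw [Real.sin_arccos]
    have hsq : Real.sqrt (1 - u s ^ 2) ^ 2 = 1 - u s ^ 2 := Real.sq_sqrt hX.le
    have hsqpos : 0 < Real.sqrt (1 - u s ^ 2) := Real.sqrt_pos.2 hX
    have hw : a * tan s + b * cot s = b * DD q 1 s / (sin s * cos s) := by
      rw [Real.tan_eq_sin_div_cos, Real.cot_eq_cos_div_sin]
      simp only [DD]
      rw [hqdef]
      field_simp
    rw [hw]
    rw [mul_pow, hsq]
    have e1 : (-(1 / Real.sqrt (1 - u s ^ 2))) ^ 2 = 1 / (1 - u s ^ 2) := by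
      rw [neg_sq, div_pow, one_pow, hsq]
    rw [e1]
    field_simp
    ring
  rw [intervalIntegral.integral_of_le hpi.le]
  rw [← MeasureTheory.setIntegral_congr_set Ioo_ae_eq_Ioc]
  rw [MeasureTheory.setIntegral_congr_fun measurableSet_Ioo hkey]
  rw [MeasureTheory.integral_const_mul]
  have hIoo : ∫ s in Ioo (0:ℝ) (π/2), sin s * cos s / DD q 1 s = L / (2 * (q - 1)) := by
    have h := integral_sincos_div hq0 one_pos hq1.ne'
    rw [intervalIntegral.integral_of_le hpi.le] at h
    rw [MeasureTheory.setIntegral_congr_set Ioo_ae_eq_Ioc, h]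
    rw [div_one]
  rw [hIoo]
  have hbq : b * (q - 1) = a - b := by rw [hqdef]; field_simp
  rw [← hbq]
  have hq1' : q - 1 ≠ 0 := by linarith
  field_simp
  ring

set_option maxHeartbeats 2000000 in
lemma part1 {a b : ℝ} (hb : 0 < b) (hab : b < a) (α : ℝ → ℝ)
    (hα : ContDiffOn ℝ 1 α (Icc 0 (π/2))) (h0 : α 0 = 0) (h1 : α (π/2) = π) :
    8 * (a - b) / Real.log (a / b) ≤
      ∫ s in (0:ℝ)..(π/2), (a * tan s + b * cot s) *
        (derivWithin α (Icc 0 (π/2)) s)^2 * sin (α s)^2 := by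
  have ha : 0 < a := hb.trans hab
  have hpi : (0:ℝ) < π/2 := by positivity
  have hIcc := uniqueDiffOn_Icc hpi
  set g := derivWithin α (Icc 0 (π/2)) with hgdef
  have hαc : ContinuousOn α (Icc 0 (π/2)) := hα.continuousOn
  have hgc : ContinuousOn g (Icc 0 (π/2)) := hα.continuousOn_derivWithin hIcc le_rfl
  obtain ⟨M0, hM0⟩ := isCompact_Icc.exists_bound_of_continuousOn hgc
  set M := max M0 0 with hMdef
  have hM : ∀ x ∈ Icc (0:ℝ) (π/2), |g x| ≤ M := fun x hx => (hM0 x hx).trans (le_max_left _ _)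
  have hMnn : 0 ≤ M := le_max_right _ _
  have hdiff : DifferentiableOn ℝ α (Icc 0 (π/2)) := hα.differentiableOn one_ne_zero
  have hlip : ∀ x ∈ Icc (0:ℝ) (π/2), ∀ y ∈ Icc (0:ℝ) (π/2), |α y - α x| ≤ M * |y - x| := by
    intro x hx y hy
    have := Convex.norm_image_sub_le_of_norm_derivWithin_le hdiff
      (fun z hz => by simpa [hgdef] using hM z hz) (convex_Icc _ _) hx hy
    simpa [Real.norm_eq_abs] using this
  have hα_ub : ∀ s ∈ Icc (0:ℝ) (π/2), |α s| ≤ M * s := by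
    intro s hs
    have := hlip 0 ⟨le_rfl, hpi.le⟩ s hs
    simpa [h0, abs_of_nonneg hs.1] using this
  have hα_ub2 : ∀ s ∈ Icc (0:ℝ) (π/2), |π - α s| ≤ M * (π/2 - s) := by
    intro s hs
    have h := hlip s hs (π/2) ⟨hpi.le, le_rfl⟩
    rw [h1] at h
    have h2 : |π/2 - s| = π/2 - s := abs_of_nonneg (by linarith [hs.2])
    rwa [h2] at h
  -- the function v = g * sin(α) and its integral
  set v : ℝ → ℝ := fun s => g s * sin (α s) with hvdef
  have hvc : ContinuousOn v (Icc 0 (π/2)) :=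
    hgc.mul (Real.continuous_sin.comp_continuousOn hαc)
  have hv_int : IntervalIntegrable v volume 0 (π/2) := by
    apply ContinuousOn.intervalIntegrable
    rwa [uIcc_of_le hpi.le]
  have hFTC : ∫ s in (0:ℝ)..(π/2), (-(sin (α s)) * g s) = -2 := by
    have hcont : ContinuousOn (fun s => cos (α s)) (Icc 0 (π/2)) :=
      Real.continuous_cos.comp_continuousOn hαc
    have hderiv : ∀ x ∈ Ioo (0:ℝ) (π/2),
        HasDerivAt (fun s => cos (α s)) (-(sin (α x)) * g x) x := by
      intro x hx
      have hx' : x ∈ Icc (0:ℝ) (π/2) := ⟨hx.1.le, hx.2.le⟩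
      have hd : HasDerivWithinAt α (g x) (Icc 0 (π/2)) x := (hdiff x hx').hasDerivWithinAt
      have hd' : HasDerivAt α (g x) x := hd.hasDerivAt (Icc_mem_nhds hx.1 hx.2)
      exact (Real.hasDerivAt_cos (α x)).comp x hd'
    have hint : IntervalIntegrable (fun s => -(sin (α s)) * g s) volume 0 (π/2) := by
      apply ContinuousOn.intervalIntegrable
      rw [uIcc_of_le hpi.le]
      exact ((Real.continuous_sin.comp_continuousOn hαc).neg).mul hgc
    rw [integral_eq_sub_of_hasDerivAt_of_le hpi.le hcont hderiv hint, h0, h1]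
    norm_num
  have hv2 : ∫ s in (0:ℝ)..(π/2), v s = 2 := by
    have heq : v = fun s => -((-(sin (α s))) * g s) := by
      funext s; simp only [hvdef]; ring
    rw [heq, intervalIntegral.integral_neg, hFTC]
    norm_num
  -- the energy density F
  obtain ⟨F, hFdef⟩ : ∃ F : ℝ → ℝ,
      F = fun s => (a * tan s + b * cot s) * g s ^ 2 * sin (α s) ^ 2 := ⟨_, rfl⟩
  obtain ⟨Cb, hCbdef⟩ : ∃ Cb : ℝ, Cb = (a + b) * (M^4 * (π/2)^2) := ⟨_, rfl⟩
  have hCbnn : 0 ≤ Cb := by rw [hCbdef]; positivity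
  -- pointwise bounds for F on Ioc
  have hFbound : ∀ s ∈ Ioc (0:ℝ) (π/2), 0 ≤ F s ∧ F s ≤ Cb := by
    intro s hs
    rcases eq_or_lt_of_le hs.2 with heq | hlt
    · have ht : tan s = 0 := by rw [heq]; exact Real.tan_pi_div_two
      have hct : cot s = 0 := by
        rw [heq, Real.cot_eq_cos_div_sin, Real.cos_pi_div_two]; simp
      constructor <;> simp [hFdef, ht, hct, hCbnn]
    · have hs1 : 0 < s := hs.1
      have hs2 : s < π/2 := hlt
      have hsin : 0 < sin s := sin_pos_of_pos_of_lt_pi hs1 (by linarith [pi_pos])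
      have hcos : 0 < cos s := Real.cos_pos_of_mem_Ioo ⟨by linarith [pi_pos], hs2⟩
      have htan : 0 ≤ tan s := by
        rw [Real.tan_eq_sin_div_cos]; positivity
      have hcot : 0 ≤ cot s := by
        rw [Real.cot_eq_cos_div_sin]; positivity
      have hsmem : s ∈ Icc (0:ℝ) (π/2) := ⟨hs1.le, hs2.le⟩
      have hg2 : g s ^ 2 ≤ M ^ 2 := by
        have := hM s hsmem
        nlinarith [abs_nonneg (g s), sq_abs (g s)]
      -- bound 1 : tan s * sin (α s)^2 ≤ M^2 * (π/2)^2
      have hd1 : 0 < π/2 - s := by linarith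
      have hsin2a : sin (α s) ^ 2 ≤ (M * (π/2 - s))^2 := by
        have e1 : sin (α s) ^ 2 = sin (π - α s) ^ 2 := by rw [Real.sin_pi_sub]
        have e2 : sin (π - α s) ^ 2 ≤ (π - α s) ^ 2 := Real.sin_sq_le_sq
        have e3 : (π - α s) ^ 2 ≤ (M * (π/2 - s))^2 := by
          rw [← sq_abs (π - α s)]
          apply pow_le_pow_left₀ (abs_nonneg _) (hα_ub2 s hsmem)
        linarith
      have hcosb : 2/π * (π/2 - s) ≤ cos s := by
        have := Real.mul_le_sin (x := π/2 - s) (by linarith) (by linarith)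
        rwa [Real.sin_pi_div_two_sub] at this
      have htc : tan s * cos s = sin s := Real.tan_mul_cos hcos.ne'
      have htd : tan s * (π/2 - s) ≤ π/2 := by
        have h3 : tan s * (2/π * (π/2 - s)) ≤ tan s * cos s :=
          mul_le_mul_of_nonneg_left hcosb htan
        rw [htc] at h3
        have h4 : sin s ≤ 1 := sin_le_one s
        have h5 : 2/π * (tan s * (π/2 - s)) ≤ 1 := by
          calc 2/π * (tan s * (π/2 - s)) = tan s * (2/π * (π/2 - s)) := by ring
            _ ≤ sin s := h3
            _ ≤ 1 := h4
        have h6 := mul_le_mul_of_nonneg_left h5 hpi.le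
        have hπ : (π:ℝ) ≠ 0 := pi_pos.ne'
        calc tan s * (π/2 - s) = π/2 * (2/π * (tan s * (π/2 - s))) := by field_simp
          _ ≤ π/2 * 1 := h6
          _ = π/2 := mul_one _
      have hb1 : tan s * sin (α s) ^ 2 ≤ M^2 * (π/2)^2 := by
        have step1 : tan s * sin (α s)^2 ≤ tan s * (M * (π/2 - s))^2 :=
          mul_le_mul_of_nonneg_left hsin2a htan
        have step2 : tan s * (M * (π/2 - s))^2 ≤ M^2 * (π/2)^2 := by
          have e1 : tan s * (M * (π/2 - s))^2 = M^2 * ((tan s * (π/2 - s)) * (π/2 - s)) := by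
            ring
          rw [e1]
          have e2 : (tan s * (π/2 - s)) * (π/2 - s) ≤ (π/2) * (π/2) := by
            have : (tan s * (π/2 - s)) * (π/2 - s) ≤ (π/2) * (π/2 - s) :=
              mul_le_mul_of_nonneg_right htd hd1.le
            nlinarith
          calc M^2 * ((tan s * (π/2 - s)) * (π/2 - s)) ≤ M^2 * ((π/2) * (π/2)) :=
                mul_le_mul_of_nonneg_left e2 (sq_nonneg M)
            _ = M^2 * (π/2)^2 := by ring
        linarith
      -- bound 2 : cot s * sin (α s)^2 ≤ M^2 * (π/2)^2
      have hsin2b : sin (α s) ^ 2 ≤ (M * s)^2 := by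
        have e2 : sin (α s) ^ 2 ≤ (α s) ^ 2 := Real.sin_sq_le_sq
        have e3 : (α s) ^ 2 ≤ (M * s)^2 := by
          rw [← sq_abs (α s)]
          apply pow_le_pow_left₀ (abs_nonneg _) (hα_ub s hsmem)
        linarith
      have hsinb : 2/π * s ≤ sin s := Real.mul_le_sin hs1.le hs2.le
      have hctc : cot s * sin s = cos s := by
        rw [Real.cot_eq_cos_div_sin]
        field_simp
      have hctd : cot s * s ≤ π/2 := by
        have h3 : cot s * (2/π * s) ≤ cot s * sin s :=
          mul_le_mul_of_nonneg_left hsinb hcot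
        rw [hctc] at h3
        have h4 : cos s ≤ 1 := cos_le_one s
        have h5 : 2/π * (cot s * s) ≤ 1 := by
          calc 2/π * (cot s * s) = cot s * (2/π * s) := by ring
            _ ≤ cos s := h3
            _ ≤ 1 := h4
        have h6 := mul_le_mul_of_nonneg_left h5 hpi.le
        have hπ : (π:ℝ) ≠ 0 := pi_pos.ne'
        calc cot s * s = π/2 * (2/π * (cot s * s)) := by field_simp
          _ ≤ π/2 * 1 := h6
          _ = π/2 := mul_one _
      have hb2 : cot s * sin (α s) ^ 2 ≤ M^2 * (π/2)^2 := by
        have step1 : cot s * sin (α s)^2 ≤ cot s * (M * s)^2 :=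
          mul_le_mul_of_nonneg_left hsin2b hcot
        have step2 : cot s * (M * s)^2 ≤ M^2 * (π/2)^2 := by
          have e1 : cot s * (M * s)^2 = M^2 * ((cot s * s) * s) := by ring
          rw [e1]
          have e2 : (cot s * s) * s ≤ (π/2) * (π/2) := by
            have : (cot s * s) * s ≤ (π/2) * s := mul_le_mul_of_nonneg_right hctd hs1.le
            nlinarith
          calc M^2 * ((cot s * s) * s) ≤ M^2 * ((π/2) * (π/2)) :=
                mul_le_mul_of_nonneg_left e2 (sq_nonneg M)
            _ = M^2 * (π/2)^2 := by ring
        linarith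
      constructor
      · have hw0 : 0 ≤ (a * tan s + b * cot s) :=
          add_nonneg (mul_nonneg ha.le htan) (mul_nonneg hb.le hcot)
        simp only [hFdef]
        exact mul_nonneg (mul_nonneg hw0 (sq_nonneg _)) (sq_nonneg _)
      · simp only [hFdef, hCbdef]
        have e1 : (a * tan s + b * cot s) * g s ^ 2 * sin (α s) ^ 2
            = a * (g s ^ 2 * (tan s * sin (α s)^2)) + b * (g s ^ 2 * (cot s * sin (α s)^2)) := by
          ring
        rw [e1]
        have hga : g s ^ 2 * (tan s * sin (α s)^2) ≤ M^2 * (M^2 * (π/2)^2) := by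
          apply mul_le_mul hg2 hb1 (mul_nonneg htan (sq_nonneg _)) (sq_nonneg M)
        have hgb : g s ^ 2 * (cot s * sin (α s)^2) ≤ M^2 * (M^2 * (π/2)^2) := by
          apply mul_le_mul hg2 hb2 (mul_nonneg hcot (sq_nonneg _)) (sq_nonneg M)
        have := add_le_add (mul_le_mul_of_nonneg_left hga ha.le)
          (mul_le_mul_of_nonneg_left hgb hb.le)
        calc a * (g s ^ 2 * (tan s * sin (α s)^2)) + b * (g s ^ 2 * (cot s * sin (α s)^2))
            ≤ a * (M^2 * (M^2 * (π/2)^2)) + b * (M^2 * (M^2 * (π/2)^2)) := this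
          _ = (a + b) * (M ^ 4 * (π/2)^2) := by ring
  -- integrability of F
  have hFmeas : AEStronglyMeasurable F (volume.restrict (Ioc 0 (π/2))) := by
    have htanm : Measurable Real.tan := by
      have : Real.tan = fun x => sin x / cos x := by
        funext x; exact Real.tan_eq_sin_div_cos x
      rw [this]
      exact Real.continuous_sin.measurable.div Real.continuous_cos.measurable
    have hcotm : Measurable Real.cot := by
      have : Real.cot = fun x => cos x / sin x := by
        funext x; exact Real.cot_eq_cos_div_sin x
      rw [this]
      exact Real.continuous_cos.measurable.div Real.continuous_sin.measurable
    have h1 : AEStronglyMeasurable (fun s => a * tan s + b * cot s)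
        (volume.restrict (Ioc 0 (π/2))) :=
      ((htanm.const_mul a).add (hcotm.const_mul b)).aestronglyMeasurable
    have hg1 : AEStronglyMeasurable g (volume.restrict (Ioc 0 (π/2))) :=
      (hgc.mono Ioc_subset_Icc_self).aestronglyMeasurable measurableSet_Ioc
    have hs1 : AEStronglyMeasurable (fun s => sin (α s)) (volume.restrict (Ioc 0 (π/2))) :=
      ((Real.continuous_sin.comp_continuousOn hαc).mono
        Ioc_subset_Icc_self).aestronglyMeasurable measurableSet_Ioc
    rw [hFdef]
    exact (h1.mul (hg1.mul hg1)).mul (hs1.mul hs1) |>.congr (by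
      filter_upwards with s
      simp only [Pi.mul_apply]
      ring)
  have hFint : IntervalIntegrable F volume 0 (π/2) := by
    rw [intervalIntegrable_iff_integrableOn_Ioc_of_le hpi.le]
    apply Integrable.mono' (g := fun _ => Cb)
    · exact integrableOn_const measure_Ioc_lt_top.ne
    · exact hFmeas
    · rw [ae_restrict_iff' measurableSet_Ioc]
      filter_upwards with s hs
      rw [Real.norm_eq_abs, abs_of_nonneg (hFbound s hs).1]
      exact (hFbound s hs).2
  -- comparison function G
  have hL : 0 < Real.log (a/b) := Real.log_pos ((one_lt_div hb).2 hab)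
  obtain ⟨c, hcdef⟩ : ∃ c : ℝ, c = 4 * (a - b) / Real.log (a/b) := ⟨_, rfl⟩
  have hc : 0 < c := by
    rw [hcdef]
    have : 0 < a - b := by linarith
    positivity
  obtain ⟨G, hGdef⟩ : ∃ G : ℝ → ℝ,
      G = fun s => 2 * c * v s - c^2 * (sin s * cos s / DD a b s) := ⟨_, rfl⟩
  have hDD := DD_pos (a := a) (b := b) (hb.trans hab) hb
  have hDDc : Continuous (fun s => sin s * cos s / DD a b s) := by
    have : Continuous (DD a b) := by unfold DD; continuity
    exact (continuous_sin.mul continuous_cos).div this fun s => (hDD s).ne'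
  have hW_int : IntervalIntegrable (fun s => sin s * cos s / DD a b s) volume 0 (π/2) :=
    hDDc.intervalIntegrable _ _
  have hGint : IntervalIntegrable G volume 0 (π/2) := by
    rw [hGdef]
    exact (hv_int.const_mul (2*c)).sub ((hDDc.intervalIntegrable _ _).const_mul (c^2))
  -- pointwise comparison on Icc
  have hGF : ∀ s ∈ Icc (0:ℝ) (π/2), G s ≤ F s := by
    intro s hs
    rcases eq_or_lt_of_le hs.1 with heq0 | hgt
    · -- s = 0
      rw [hGdef, hFdef, ← heq0]
      simp [h0, hvdef, Real.cot_eq_cos_div_sin]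
    rcases eq_or_lt_of_le hs.2 with heq1 | hlt
    · -- s = π / 2
      rw [hGdef, hFdef, heq1]
      simp [h1, hvdef, Real.sin_pi, Real.cot_eq_cos_div_sin, Real.cos_pi_div_two,
        Real.tan_pi_div_two]
    · have hsin : 0 < sin s := sin_pos_of_pos_of_lt_pi hgt (by linarith [pi_pos])
      have hcos : 0 < cos s := Real.cos_pos_of_mem_Ioo ⟨by linarith [pi_pos], hlt⟩
      have hDs : 0 < DD a b s := hDD s
      have hw : a * tan s + b * cot s = DD a b s / (sin s * cos s) := by
        rw [Real.tan_eq_sin_div_cos, Real.cot_eq_cos_div_sin]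
        simp only [DD]
        field_simp
      have key : F s - G s
          = (DD a b s * v s - c * (sin s * cos s))^2 / (sin s * cos s * DD a b s) := by
        rw [hFdef, hGdef]
        simp only [hvdef, hw]
        field_simp
        ring
      have : 0 ≤ F s - G s := by
        rw [key]; positivity
      linarith
  have hmono : ∫ s in (0:ℝ)..(π/2), G s ≤ ∫ s in (0:ℝ)..(π/2), F s :=
    intervalIntegral.integral_mono_on hpi.le hGint hFint hGF
  have hGval : ∫ s in (0:ℝ)..(π/2), G s = 8 * (a - b) / Real.log (a/b) := by
    rw [hGdef]
    rw [intervalIntegral.integral_sub (hv_int.const_mul (2*c))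
      ((hDDc.intervalIntegrable 0 (π/2)).const_mul (c^2))]
    rw [intervalIntegral.integral_const_mul, intervalIntegral.integral_const_mul]
    rw [hv2, integral_sincos_div (hb.trans hab) hb hab.ne']
    rw [hcdef]
    have h2 : a - b ≠ 0 := by intro h; linarith [sub_pos.2 hab]
    field_simp
    ring
  calc 8 * (a - b) / Real.log (a/b) = ∫ s in (0:ℝ)..(π/2), G s := hGval.symm
    _ ≤ ∫ s in (0:ℝ)..(π/2), F s := hmono
    _ = ∫ s in (0:ℝ)..(π/2), (a * tan s + b * cot s) *
          (derivWithin α (Icc 0 (π/2)) s)^2 * sin (α s)^2 := by rw [hFdef]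

end Stmt5Aux

/-- For nonzero integers `k, l` with `|k| > |l|`, every C¹ function
`α : [0, π/2] → ℝ` with `α(0) = 0`, `α(π/2) = π` satisfies
`∫₀^{π/2} (k²·tan s + l²·cot s)·α'(s)²·sin²α(s) ds ≥ 8·(k² − l²)/ln(k²/l²)`, and the bound
is attained by `α(s) = arccos(1 − 2·ln((k²/l²)·sin²s + cos²s)/ln(k²/l²))`: this
configuration is a global minimizer of the reduced σ₂-energy with these boundary data. -/
theorem stmt_5 (k l : ℤ) (hk : k ≠ 0) (hl : l ≠ 0) (hkl : |k| > |l|) :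
    (∀ α : ℝ → ℝ, ContDiffOn ℝ 1 α (Icc 0 (π/2)) → α 0 = 0 → α (π/2) = π →
      8 * ((k : ℝ)^2 - (l : ℝ)^2) / Real.log ((k : ℝ)^2 / (l : ℝ)^2) ≤
        ∫ s in (0:ℝ)..(π/2), ((k : ℝ)^2 * tan s + (l : ℝ)^2 * cot s) *
          (derivWithin α (Icc 0 (π/2)) s)^2 * sin (α s)^2) ∧
    (∫ s in (0:ℝ)..(π/2), ((k : ℝ)^2 * tan s + (l : ℝ)^2 * cot s) *
        (derivWithin (fun s => arccos (1 - 2 * Real.log (((k : ℝ)^2 / (l : ℝ)^2) * sin s ^ 2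
            + cos s ^ 2) / Real.log ((k : ℝ)^2 / (l : ℝ)^2))) (Icc 0 (π/2)) s)^2 *
        sin (arccos (1 - 2 * Real.log (((k : ℝ)^2 / (l : ℝ)^2) * sin s ^ 2 + cos s ^ 2)
            / Real.log ((k : ℝ)^2 / (l : ℝ)^2)))^2)
      = 8 * ((k : ℝ)^2 - (l : ℝ)^2) / Real.log ((k : ℝ)^2 / (l : ℝ)^2) := by
  have hl' : ((l:ℝ)) ≠ 0 := Int.cast_ne_zero.2 hl
  have hb : (0:ℝ) < (l:ℝ)^2 := by positivity
  have hint : l^2 < k^2 := by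
    calc l^2 = |l|^2 := (sq_abs l).symm
      _ < |k|^2 := by
          apply pow_lt_pow_left₀ hkl (abs_nonneg l)
          norm_num
      _ = k^2 := sq_abs k
  have hab : (l:ℝ)^2 < (k:ℝ)^2 := by exact_mod_cast hint
  exact ⟨fun α hα h0 h1 => part1 hb hab α hα h0 h1, part2 hb hab⟩
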